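/- arXiv:2008.11661 — 2 statements merged into one kernel-verified Lean document; each statement's English description precedes it below -/
import Mathlib

section
/- Lagrange inversion corollary: let G(x) be a formal power series with G(0) invertible, and let R(x) be the unique power series solution of R(x) = x·G(R(x)). If H(x) is any formal power series and a_n := [x^n](H(x)·G(x)^n), then Σ_{n≥0} a_n x^n = H(R(x)) / (1 - x·G'(R(x))). -/
open PowerSeries Finset

/-- Composition `f(g(X))` of formal power series (meaningful when `g` has zero
constant term). -/
noncomputable def pcomp (f g : ℚ⟦X⟧) : ℚ⟦X⟧ :=
  PowerSeries.mk fun n => ∑ k ∈ Finset.range (n + 1),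
    PowerSeries.coeff (R := ℚ) k f * PowerSeries.coeff (R := ℚ) n (g ^ k)

/-- Division of a power series by `X` (dropping the constant term). -/
noncomputable def shiftDiv (f : ℚ⟦X⟧) : ℚ⟦X⟧ :=
  PowerSeries.mk fun n => PowerSeries.coeff (R := ℚ) (n + 1) f

lemma coeff_pcomp (f g : ℚ⟦X⟧) (n : ℕ) :
    coeff (R := ℚ) n (pcomp f g) = ∑ k ∈ range (n + 1), coeff (R := ℚ) k f * coeff (R := ℚ) n (g ^ k) := by
  simp [pcomp]

lemma coeff_pow_eq_zero {g : ℚ⟦X⟧} (hg : constantCoeff (R := ℚ) g = 0) {k n : ℕ} (h : n < k) :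
    coeff (R := ℚ) n (g ^ k) = 0 := by
  have hdvd : (X : ℚ⟦X⟧) ^ k ∣ g ^ k :=
    pow_dvd_pow_of_dvd (PowerSeries.X_dvd_iff.mpr hg) k
  exact PowerSeries.X_pow_dvd_iff.mp hdvd n h

lemma aeval_coeff {g : ℚ⟦X⟧} (hg : constantCoeff (R := ℚ) g = 0) (p : Polynomial ℚ) (n : ℕ) :
    coeff (R := ℚ) n (Polynomial.aeval g p) = ∑ k ∈ range (n + 1), p.coeff k * coeff (R := ℚ) n (g ^ k) := by
  set M := max (n + 1) (p.natDegree + 1) with hM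
  have hdeg : p.natDegree < M := lt_of_lt_of_le (Nat.lt_succ_self _) (le_max_right _ _)
  rw [Polynomial.aeval_eq_sum_range' hdeg, map_sum]
  simp_rw [map_smul, smul_eq_mul]
  refine (Finset.sum_subset (Finset.range_subset_range.mpr (le_max_left _ _)) ?_).symm
  intro k hk hk'
  rw [coeff_pow_eq_zero hg (by simpa using hk'), mul_zero]

lemma coeff_pcomp_trunc {g : ℚ⟦X⟧} (hg : constantCoeff (R := ℚ) g = 0) (f : ℚ⟦X⟧) {n M : ℕ}
    (h : n < M) :
    coeff (R := ℚ) n (pcomp f g) = coeff (R := ℚ) n (Polynomial.aeval g (trunc M f)) := by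
  rw [coeff_pcomp, aeval_coeff hg]
  refine Finset.sum_congr rfl fun k hk => ?_
  rw [coeff_trunc, if_pos (lt_of_lt_of_le (Finset.mem_range.mp hk) h)]

lemma pcomp_one {g : ℚ⟦X⟧} : pcomp 1 g = 1 := by
  ext n
  rw [coeff_pcomp]
  rcases Nat.eq_zero_or_pos n with h | h
  · subst h; simp
  · rw [Finset.sum_eq_single 0]
    · simp
    · intro k hk hk0
      rw [PowerSeries.coeff_one, if_neg hk0, zero_mul]
    · simp

lemma pcomp_mul {g : ℚ⟦X⟧} (hg : constantCoeff (R := ℚ) g = 0) (f₁ f₂ : ℚ⟦X⟧) :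
    pcomp (f₁ * f₂) g = pcomp f₁ g * pcomp f₂ g := by
  ext n
  set P₁ := trunc (n + 1) f₁
  set P₂ := trunc (n + 1) f₂
  have h₁ : coeff (R := ℚ) n (pcomp f₁ g * pcomp f₂ g) = coeff (R := ℚ) n ((Polynomial.aeval g P₁ : ℚ⟦X⟧) *
      Polynomial.aeval g P₂) := by
    rw [PowerSeries.coeff_mul, PowerSeries.coeff_mul]
    refine Finset.sum_congr rfl fun p hp => ?_
    have hmem := Finset.HasAntidiagonal.mem_antidiagonal.mp hp
    have hp1 : p.1 < n + 1 := Nat.lt_succ_of_le (le_of_add_le_left hmem.le)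
    have hp2 : p.2 < n + 1 := Nat.lt_succ_of_le (le_of_add_le_right hmem.le)
    rw [coeff_pcomp_trunc hg f₁ hp1, coeff_pcomp_trunc hg f₂ hp2]
  rw [h₁, ← map_mul, coeff_pcomp_trunc hg (f₁ * f₂) (Nat.lt_succ_self n),
    aeval_coeff hg, aeval_coeff hg]
  refine Finset.sum_congr rfl fun k hk => ?_
  have hkn : k < n + 1 := Finset.mem_range.mp hk
  congr 1
  rw [coeff_trunc, if_pos hkn, PowerSeries.coeff_mul, Polynomial.coeff_mul]
  refine Finset.sum_congr rfl fun p hp => ?_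
  have hmem := Finset.HasAntidiagonal.mem_antidiagonal.mp hp
  have hp1 : p.1 < n + 1 := lt_of_le_of_lt (le_of_add_le_left hmem.le) hkn
  have hp2 : p.2 < n + 1 := lt_of_le_of_lt (le_of_add_le_right hmem.le) hkn
  simp only [P₁, P₂, coeff_trunc, if_pos hp1, if_pos hp2]

lemma aeval_derivative (g : ℚ⟦X⟧) (p : Polynomial ℚ) :
    d⁄dX ℚ (Polynomial.aeval g p) =
      (Polynomial.aeval g (Polynomial.derivative p) : ℚ⟦X⟧) * d⁄dX ℚ g := by
  induction p using Polynomial.induction_on' with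
  | add p q hp hq => simp only [map_add, hp, hq, add_mul]
  | monomial k a =>
    rw [Polynomial.aeval_monomial, Polynomial.derivative_monomial, Polynomial.aeval_monomial]
    cases k with
    | zero => simp
    | succ m =>
      have : d⁄dX ℚ ((algebraMap ℚ ℚ⟦X⟧) a * g ^ (m + 1)) =
          (algebraMap ℚ ℚ⟦X⟧) a * d⁄dX ℚ (g ^ (m + 1)) := by
        rw [Derivation.leibniz, Derivation.map_algebraMap, smul_zero, add_zero, smul_eq_mul]
      rw [this, Derivation.leibniz_pow]
      simp only [Nat.add_sub_cancel, smul_eq_mul, Nat.succ_sub_one, nsmul_eq_mul]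
      push_cast
      ring

lemma pcomp_deriv {g : ℚ⟦X⟧} (hg : constantCoeff (R := ℚ) g = 0) (f : ℚ⟦X⟧) :
    d⁄dX ℚ (pcomp f g) = pcomp (d⁄dX ℚ f) g * d⁄dX ℚ g := by
  ext n
  set P := trunc (n + 2) f with hP
  have hL : coeff (R := ℚ) n (d⁄dX ℚ (pcomp f g)) =
      coeff (R := ℚ) n ((Polynomial.aeval g (Polynomial.derivative P) : ℚ⟦X⟧) * d⁄dX ℚ g) := by
    rw [PowerSeries.coeff_derivative, coeff_pcomp_trunc hg f (by omega : n + 1 < n + 2),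
      ← PowerSeries.coeff_derivative, aeval_derivative]
  rw [hL, PowerSeries.coeff_mul, PowerSeries.coeff_mul]
  refine Finset.sum_congr rfl fun p hp => ?_
  have hmem := Finset.HasAntidiagonal.mem_antidiagonal.mp hp
  have hp1 : p.1 < n + 1 := Nat.lt_succ_of_le (le_of_add_le_left hmem.le)
  rw [coeff_pcomp_trunc hg (d⁄dX ℚ f) hp1, PowerSeries.trunc_derivative]

lemma crux {V : ℚ⟦X⟧} (hV : constantCoeff (R := ℚ) V ≠ 0) (m' : ℕ) :
    coeff (R := ℚ) (m' + 1) (d⁄dX ℚ (X * V) * (V⁻¹) ^ (m' + 2)) = 0 := by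
  have hVW : V * V⁻¹ = 1 := PowerSeries.mul_inv_cancel V hV
  have hd : d⁄dX ℚ (X * V) = X * d⁄dX ℚ V + V := by
    rw [Derivation.leibniz, derivative_X, smul_eq_mul, smul_eq_mul, mul_one]
  have hder : d⁄dX ℚ ((V⁻¹) ^ (m' + 1)) =
      -((m' + 1) • ((V⁻¹) ^ (m' + 2) * d⁄dX ℚ V)) := by
    rw [Derivation.leibniz_pow, PowerSeries.derivative_inv', Nat.succ_sub_one, smul_eq_mul,
      ← smul_neg]
    congr 1
    ring
  set c := coeff (R := ℚ) (m' + 1) ((V⁻¹) ^ (m' + 1)) with hcdef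
  set A := coeff (R := ℚ) m' ((V⁻¹) ^ (m' + 2) * d⁄dX ℚ V) with hAdef
  have hc : c * ((m' : ℚ) + 1) = -(((m' : ℚ) + 1) * A) := by
    rw [hcdef, ← PowerSeries.coeff_derivative, hder, map_neg, map_nsmul, nsmul_eq_mul, hAdef]
    push_cast
    ring
  have hne : ((m' : ℚ) + 1) ≠ 0 := by positivity
  have hA : A = -c := by
    have h2 : ((m' : ℚ) + 1) * A = ((m' : ℚ) + 1) * (-c) := by linear_combination hc
    exact mul_left_cancel₀ hne h2
  have hxpand : d⁄dX ℚ (X * V) * (V⁻¹) ^ (m' + 2) =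
      X * (d⁄dX ℚ V * (V⁻¹) ^ (m' + 2)) + (V⁻¹) ^ (m' + 1) := by
    rw [hd]
    linear_combination ((V⁻¹) ^ (m' + 1)) * hVW
  rw [hxpand, map_add, coeff_succ_X_mul, mul_comm (d⁄dX ℚ V), ← hAdef, ← hcdef, hA]
  ring

lemma coeff_pcomp_ext {g : ℚ⟦X⟧} (hg : constantCoeff (R := ℚ) g = 0) (f : ℚ⟦X⟧) {n M : ℕ}
    (h : n < M) :
    coeff (R := ℚ) n (pcomp f g) = ∑ k ∈ range M, coeff (R := ℚ) k f * coeff (R := ℚ) n (g ^ k) := by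
  rw [coeff_pcomp]
  refine Finset.sum_subset (Finset.range_subset_range.mpr h) fun k _ hk' => ?_
  rw [coeff_pow_eq_zero hg (by simpa using hk'), mul_zero]

lemma term_lemma {V : ℚ⟦X⟧} (hV : constantCoeff (R := ℚ) V ≠ 0) {k N : ℕ} (hk : k ≤ N) :
    coeff (R := ℚ) N ((X * V) ^ k * ((V⁻¹) ^ (N + 1) * d⁄dX ℚ (X * V))) =
      if k = N then 1 else 0 := by
  have hVW : V * V⁻¹ = 1 := PowerSeries.mul_inv_cancel V hV
  obtain ⟨d, rfl⟩ : ∃ d, N = d + k := ⟨N - k, by omega⟩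
  have hpow : (X * V) ^ k * ((V⁻¹) ^ (d + k + 1) * d⁄dX ℚ (X * V)) =
      X ^ k * ((V⁻¹) ^ (d + 1) * d⁄dX ℚ (X * V)) := by
    have h1 : V ^ k * (V⁻¹) ^ (d + k + 1) = (V⁻¹) ^ (d + 1) := by
      calc V ^ k * (V⁻¹) ^ (d + k + 1) = (V * V⁻¹) ^ k * (V⁻¹) ^ (d + 1) := by ring
        _ = (V⁻¹) ^ (d + 1) := by rw [hVW, one_pow, one_mul]
    calc (X * V) ^ k * ((V⁻¹) ^ (d + k + 1) * d⁄dX ℚ (X * V))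
        = X ^ k * ((V ^ k * (V⁻¹) ^ (d + k + 1)) * d⁄dX ℚ (X * V)) := by ring
      _ = _ := by rw [h1]
  rw [hpow, PowerSeries.coeff_X_pow_mul]
  rcases Nat.eq_zero_or_pos d with hd | hd
  · subst hd
    rw [if_pos (by omega : k = 0 + k)]
    rw [coeff_zero_eq_constantCoeff, map_mul, pow_one, PowerSeries.constantCoeff_inv]
    have h2 : constantCoeff (R := ℚ) (d⁄dX ℚ (X * V)) = constantCoeff (R := ℚ) V := by
      rw [← coeff_zero_eq_constantCoeff, PowerSeries.coeff_derivative, coeff_succ_X_mul,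
        coeff_zero_eq_constantCoeff]
      push_cast; ring
    rw [h2, inv_mul_cancel₀ hV]
  · obtain ⟨d', rfl⟩ : ∃ d', d = d' + 1 := ⟨d - 1, by omega⟩
    rw [if_neg (by omega), mul_comm ((V⁻¹) ^ (d' + 1 + 1))]
    exact crux hV d'

lemma key_lemma {V : ℚ⟦X⟧} (hV : constantCoeff (R := ℚ) V ≠ 0) (F : ℚ⟦X⟧) (N : ℕ) :
    coeff (R := ℚ) N (pcomp F (X * V) * ((V⁻¹) ^ (N + 1) * d⁄dX ℚ (X * V))) = coeff (R := ℚ) N F := by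
  have hR0 : constantCoeff (R := ℚ) (X * V) = 0 := by simp
  set Z := (V⁻¹) ^ (N + 1) * d⁄dX ℚ (X * V) with hZ
  rw [PowerSeries.coeff_mul]
  calc ∑ p ∈ antidiagonal N, coeff (R := ℚ) p.1 (pcomp F (X * V)) * coeff (R := ℚ) p.2 Z
      = ∑ p ∈ antidiagonal N, ∑ j ∈ range (N + 1),
          coeff (R := ℚ) j F * (coeff (R := ℚ) p.1 ((X * V) ^ j) * coeff (R := ℚ) p.2 Z) := by
        refine Finset.sum_congr rfl fun p hp => ?_
        have hmem := Finset.HasAntidiagonal.mem_antidiagonal.mp hp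
        have hp1 : p.1 < N + 1 := Nat.lt_succ_of_le (le_of_add_le_left hmem.le)
        rw [coeff_pcomp_ext hR0 F hp1, Finset.sum_mul]
        exact Finset.sum_congr rfl fun j _ => by ring
    _ = ∑ j ∈ range (N + 1), coeff (R := ℚ) j F *
          ∑ p ∈ antidiagonal N, coeff (R := ℚ) p.1 ((X * V) ^ j) * coeff (R := ℚ) p.2 Z := by
        rw [Finset.sum_comm]
        exact Finset.sum_congr rfl fun j _ => by rw [Finset.mul_sum]
    _ = ∑ j ∈ range (N + 1), coeff (R := ℚ) j F * coeff (R := ℚ) N ((X * V) ^ j * Z) := by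
        exact Finset.sum_congr rfl fun j _ => by rw [PowerSeries.coeff_mul]
    _ = coeff (R := ℚ) N F := by
        rw [Finset.sum_eq_single N]
        · rw [term_lemma hV le_rfl, if_pos rfl, mul_one]
        · intro j hj hjne
          rw [term_lemma hV (by simpa using Nat.lt_succ_iff.mp (Finset.mem_range.mp hj)),
            if_neg hjne, mul_zero]
        · intro h; exact absurd (Finset.self_mem_range_succ N) h

lemma constantCoeff_pcomp (f g : ℚ⟦X⟧) :
    constantCoeff (R := ℚ) (pcomp f g) = constantCoeff (R := ℚ) f := by
  rw [← coeff_zero_eq_constantCoeff, coeff_pcomp]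
  simp

lemma pcomp_pow {g : ℚ⟦X⟧} (hg : constantCoeff (R := ℚ) g = 0) (f : ℚ⟦X⟧) (n : ℕ) :
    pcomp (f ^ n) g = (pcomp f g) ^ n := by
  induction n with
  | zero => simpa using pcomp_one
  | succ n ih => rw [pow_succ, pcomp_mul hg, ih, pow_succ]

/-- Lagrange inversion corollary: if `G(0)` is invertible and `R = x·G(R(x))`
with `R(0) = 0`, then for any `H`, `Σ_{n≥0} ([xⁿ](H·Gⁿ))·xⁿ = H(R)/(1 - x·G'(R))`. -/
theorem lagrange_corollary (G H R : ℚ⟦X⟧)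
    (hG : IsUnit (PowerSeries.constantCoeff (R := ℚ) G))
    (hR0 : PowerSeries.constantCoeff (R := ℚ) R = 0)
    (hR : R = X * pcomp G R) :
    PowerSeries.mk (fun n => PowerSeries.coeff (R := ℚ) n (H * G ^ n)) =
      pcomp H R * (1 - X * pcomp (d⁄dX ℚ G) R)⁻¹ := by
  set V := pcomp G R with hVdef
  have hV : constantCoeff (R := ℚ) V ≠ 0 := by
    rw [hVdef, constantCoeff_pcomp]; exact hG.ne_zero
  have hVW : V * V⁻¹ = 1 := PowerSeries.mul_inv_cancel V hV
  have hchain : d⁄dX ℚ V = pcomp (d⁄dX ℚ G) R * d⁄dX ℚ R := pcomp_deriv hR0 G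
  have hdR : d⁄dX ℚ R = X * (pcomp (d⁄dX ℚ G) R * d⁄dX ℚ R) + V := by
    conv_lhs => rw [hR]
    rw [Derivation.leibniz, derivative_X, smul_eq_mul, smul_eq_mul, mul_one, hchain]
  have hu : d⁄dX ℚ R * (1 - X * pcomp (d⁄dX ℚ G) R) = V := by linear_combination hdR
  have hu0 : constantCoeff (R := ℚ) (1 - X * pcomp (d⁄dX ℚ G) R) ≠ 0 := by simp
  have hinv : (1 - X * pcomp (d⁄dX ℚ G) R)⁻¹ = d⁄dX ℚ R * V⁻¹ := by
    rw [PowerSeries.inv_eq_iff_mul_eq_one hu0]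
    linear_combination V⁻¹ * hu + hVW
  rw [hinv]
  ext N
  rw [coeff_mk]
  have hkey := key_lemma hV (H * G ^ N) N
  rw [← hR] at hkey
  rw [← hkey, pcomp_mul hR0, pcomp_pow hR0, ← hVdef]
  congr 1
  have hVN : V ^ N * (V⁻¹) ^ (N + 1) = V⁻¹ := by
    calc V ^ N * (V⁻¹) ^ (N + 1) = (V * V⁻¹) ^ N * V⁻¹ := by ring
      _ = V⁻¹ := by rw [hVW, one_pow, one_mul]
  linear_combination (pcomp H R * d⁄dX ℚ R) * hVN
end

section
/- Define V(x) by V(0) = 0 and V'(x) = (C(x) - x)/(2x²), where C(x) is the generating function of connected chord diagrams satisfying 2xC(x)C'(x) = C(x)² + C(x) - x and C ∈ x + x²ℚ[[x]]. Then V(x) = C(x)²/(2x). -/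
open PowerSeries Finset

lemma coeff_shiftDiv (f : ℚ⟦X⟧) (n : ℕ) :
    PowerSeries.coeff (R := ℚ) n (shiftDiv f) = PowerSeries.coeff (R := ℚ) (n + 1) f := by
  simp [shiftDiv]

/-- If `V(0) = 0` and `V' = (C - x)/(2x²)`, where `C` satisfies `C(0)=0`,
`C'(0)=1` and `2x·C·C' = C² + C - x`, then `V = C²/(2x)`. -/
theorem vacuum_generating_function (C V : ℚ⟦X⟧)
    (hC0 : PowerSeries.constantCoeff (R := ℚ) C = 0) (hC1 : PowerSeries.coeff (R := ℚ) 1 C = 1)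
    (hode : 2 * X * C * d⁄dX ℚ C = C ^ 2 + C - X)
    (hV0 : PowerSeries.constantCoeff (R := ℚ) V = 0)
    (hV : d⁄dX ℚ V = PowerSeries.C (R := ℚ) (1 / 2) * shiftDiv (shiftDiv (C - X))) :
    V = PowerSeries.C (R := ℚ) (1 / 2) * shiftDiv (C ^ 2) := by
  -- rewrite the ODE as X * d(C²) = C² + C - X
  have hd2 : d⁄dX ℚ (C ^ 2) = 2 * C * d⁄dX ℚ C := by
    rw [pow_two, Derivation.leibniz]
    simp [smul_eq_mul]; ring
  have hode' : X * d⁄dX ℚ (C ^ 2) = C ^ 2 + C - X := by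
    rw [hd2, ← hode]; ring
  -- key coefficient identity
  have key : ∀ n : ℕ, ((n : ℚ) + 1) * PowerSeries.coeff (R := ℚ) (n + 2) (C ^ 2)
      = PowerSeries.coeff (R := ℚ) (n + 2) (C - X) := by
    intro n
    have h := congrArg (PowerSeries.coeff (R := ℚ) (n + 2)) hode'
    rw [coeff_succ_X_mul, coeff_derivative] at h
    have hx : PowerSeries.coeff (R := ℚ) (n + 2) (X : ℚ⟦X⟧) = 0 := by
      simp [coeff_X]
    rw [map_sub, map_add, hx] at h
    rw [map_sub, hx]
    push_cast at h ⊢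
    linarith [h]
  ext n
  cases n with
  | zero =>
    rw [← PowerSeries.coeff_zero_eq_constantCoeff] at hV0
    rw [hV0, PowerSeries.coeff_C_mul, coeff_shiftDiv]
    have : PowerSeries.coeff (R := ℚ) 1 (C ^ 2) = 0 := by
      rw [pow_two, PowerSeries.coeff_mul]
      rw [Finset.Nat.sum_antidiagonal_eq_sum_range_succ_mk]
      rw [Finset.sum_range_succ, Finset.sum_range_one]
      simp [hC0, PowerSeries.coeff_zero_eq_constantCoeff]
    rw [show (0 + 1 : ℕ) = 1 by rfl, this, mul_zero]
  | succ n =>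
    have h1 := congrArg (PowerSeries.coeff (R := ℚ) n) hV
    rw [coeff_derivative, PowerSeries.coeff_C_mul, coeff_shiftDiv, coeff_shiftDiv] at h1
    have h2 : PowerSeries.coeff (R := ℚ) (n + 1) (PowerSeries.C (R := ℚ) (1 / 2) * shiftDiv (C ^ 2))
        = (1 / 2 : ℚ) * PowerSeries.coeff (R := ℚ) (n + 2) (C ^ 2) := by
      rw [PowerSeries.coeff_C_mul, coeff_shiftDiv]
    rw [h2]
    have hk := key n
    have hne : ((n : ℚ) + 1) ≠ 0 := by positivity
    rw [map_sub] at hk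
    field_simp at h1 ⊢
    have h3 : ((n : ℚ) + 1) * (PowerSeries.coeff (R := ℚ) (n + 1) V * 2)
        = ((n : ℚ) + 1) * PowerSeries.coeff (R := ℚ) (n + 2) (C ^ 2) := by
      rw [hk]
      push_cast at h1 ⊢
      rw [show n + 1 + 1 = n + 2 from rfl, map_sub] at h1
      linarith [h1]
    exact mul_left_cancel₀ hne h3
end
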